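/- For r > 0, the double Laplace transform identity holds: for λ > 0 and x ≥ 0, ∫₀^∞ e^{-λt} [e^{-rt}(g(t,x+y) + g(t,y−x)) + ∫₀^t 2r e^{-rs} g(s,y) ds] dt = (1/2)e^{-(x+y)√(λ+r)}/√(λ+r) + (1/2)e^{-|y−x|√(λ+r)}/√(λ+r) + (r/λ) e^{-y√(λ+r)}/√(λ+r), for all y > 0, where g(t,z) = e^{-z²/(4t)}/√(4πt). -/

import Mathlib

open MeasureTheory Real Set

noncomputable def heatKernel (t z : ℝ) : ℝ :=
  Real.exp (-(z ^ 2) / (4 * t)) / Real.sqrt (4 * Real.pi * t)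

lemma glasser_integrable {a b : ℝ} (ha : 0 < a) :
    IntegrableOn (fun u : ℝ => Real.exp (-(a*u - b/u)^2)) (Ioi 0) := by
  refine Integrable.mono' (g := fun u => Real.exp (2*(a*b)) * Real.exp (-(a^2) * u^2))
    (((integrable_exp_neg_mul_sq (by positivity)).const_mul _).integrableOn) ?_ ?_
  · apply Measurable.aestronglyMeasurable
    fun_prop
  · filter_upwards [ae_restrict_mem measurableSet_Ioi] with u hu
    rw [Real.norm_eq_abs, abs_of_nonneg (Real.exp_nonneg _), ← Real.exp_add]
    apply Real.exp_le_exp.2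
    have hu0 : (0:ℝ) < u := hu
    have h : (a*u - b/u)^2 = a^2*u^2 - 2*(a*b) + (b/u)^2 := by
      field_simp
      ring
    nlinarith [sq_nonneg (b/u)]

lemma glasser {a b : ℝ} (ha : 0 < a) (hb : 0 ≤ b) :
    ∫ u in Ioi (0:ℝ), Real.exp (-(a*u - b/u)^2) = Real.sqrt π / (2*a) := by
  rcases eq_or_lt_of_le hb with hb0 | hb
  · have : ∀ u : ℝ, -(a*u - b/u)^2 = -(a^2) * u^2 := by
      intro u; rw [← hb0]; ring
    simp_rw [this]
    rw [integral_gaussian_Ioi]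
    rw [Real.sqrt_div pi_nonneg, Real.sqrt_sq ha.le]
    ring
  · set φ : ℝ → ℝ := fun u => a*u - b/u with hφ
    have hderiv : ∀ u ∈ Ioi (0:ℝ), HasDerivWithinAt φ (a + b/u^2) (Ioi 0) u := by
      intro u hu
      have hu0 : (0:ℝ) < u := hu
      have h1 : HasDerivAt (fun u : ℝ => a*u - b/u) (a + b/u^2) u := by
        have h2 := ((hasDerivAt_id u).const_mul a).sub ((hasDerivAt_inv hu0.ne').const_mul b)
        have h3 : a * 1 - b * -(u^2)⁻¹ = a + b/u^2 := by rw [div_eq_mul_inv]; ring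
        rw [h3] at h2
        exact h2
      exact h1.hasDerivWithinAt
    have hinj : InjOn φ (Ioi 0) := by
      have hmono : StrictMonoOn φ (Ioi 0) := by
        intro u hu v hv huv
        have hu0 : (0:ℝ) < u := hu
        have hv0 : (0:ℝ) < v := hv
        have h1 : a*u < a*v := by nlinarith
        have h2 : b/v ≤ b/u := div_le_div_of_nonneg_left hb.le hu0 huv.le
        simp only [hφ]
        linarith
      exact hmono.injOn
    have himg : φ '' Ioi 0 = univ := by
      apply eq_univ_of_forall
      intro v
      set s := Real.sqrt (v^2 + 4*(a*b)) with hs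
      have hs2 : s^2 = v^2 + 4*(a*b) := Real.sq_sqrt (by nlinarith [sq_nonneg v])
      have hsv : |v| < s := by
        rw [← Real.sqrt_sq_eq_abs]
        exact Real.sqrt_lt_sqrt (sq_nonneg v) (by nlinarith)
      have hw0 : 0 < (v + s) / (2*a) := by
        have : -v ≤ |v| := neg_le_abs v
        apply div_pos (by linarith) (by linarith)
      refine ⟨(v + s)/(2*a), hw0, ?_⟩
      have hvs : (0:ℝ) < v + s := by
        have : -v ≤ |v| := neg_le_abs v
        linarith
      simp only [hφ]
      have hne1 : v + s ≠ 0 := hvs.ne'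
      have hne2 : a ≠ 0 := ha.ne'
      field_simp
      nlinarith [hs2]
    have hchg := integral_image_eq_integral_abs_deriv_smul measurableSet_Ioi hderiv hinj
      (fun v => Real.exp (-v^2))
    rw [himg, Measure.restrict_univ] at hchg
    have hgauss : ∫ v : ℝ, Real.exp (-v^2) = Real.sqrt π := by
      have := integral_gaussian 1
      simpa using this
    -- ψ substitution
    set ψ : ℝ → ℝ := fun u => b/(a*u) with hψ
    have hψderiv : ∀ u ∈ Ioi (0:ℝ), HasDerivWithinAt ψ (-(b/a) * (u^2)⁻¹) (Ioi 0) u := by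
      intro u hu
      have hu0 : (0:ℝ) < u := hu
      have h1 : HasDerivAt (fun u : ℝ => b/(a*u)) (-(b/a) * (u^2)⁻¹) u := by
        have := (hasDerivAt_inv hu0.ne').const_mul (b/a)
        have e1 : (fun u : ℝ => b/(a*u)) = fun y => b/a * y⁻¹ := by
          funext v; rw [div_eq_mul_inv, div_mul_eq_mul_div, mul_inv]; ring
        rw [e1, show -(b/a) * (u^2)⁻¹ = b/a * -(u^2)⁻¹ by ring]
        exact this
      exact h1.hasDerivWithinAt
    have hψinj : InjOn ψ (Ioi 0) := by
      intro u hu v hv h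
      have hu0 : (0:ℝ) < u := hu
      have hv0 : (0:ℝ) < v := hv
      simp only [hψ] at h
      have h' : b*(a*v) = b*(a*u) := (div_eq_div_iff (by positivity) (by positivity)).mp h
      have h'' := mul_left_cancel₀ hb.ne' h'
      exact (mul_left_cancel₀ ha.ne' h'').symm
    have hψimg : ψ '' Ioi 0 = Ioi 0 := by
      apply Subset.antisymm
      · rintro _ ⟨u, hu, rfl⟩
        have hu0 : (0:ℝ) < u := hu
        exact div_pos hb (by positivity)
      · intro w hw
        have hw0 : (0:ℝ) < w := hw
        refine ⟨b/(a*w), div_pos hb (by positivity), ?_⟩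
        simp only [hψ]
        have h1 : a ≠ 0 := ha.ne'
        have h2 : w ≠ 0 := hw0.ne'
        have h3 : b ≠ 0 := hb.ne'
        field_simp
    have hψabs : ∀ u ∈ Ioi (0:ℝ), |(-(b/a) * ((u:ℝ)^2)⁻¹)| = b/(a*u^2) := by
      intro u hu
      have hu0 : (0:ℝ) < u := hu
      rw [abs_mul, abs_neg, abs_of_nonneg (div_nonneg hb.le ha.le),
        abs_of_nonneg (by positivity : (0:ℝ) ≤ ((u:ℝ)^2)⁻¹)]
      rw [div_mul_eq_mul_div, mul_comm, ← div_div, div_eq_mul_inv b a]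
      ring
    have hswap := integral_image_eq_integral_abs_deriv_smul measurableSet_Ioi hψderiv hψinj
      (fun v => Real.exp (-(φ v)^2))
    rw [hψimg] at hswap
    set J := ∫ u in Ioi (0:ℝ), Real.exp (-(φ u)^2) with hJ
    have hI : IntegrableOn (fun u => Real.exp (-(φ u)^2)) (Ioi 0) := glasser_integrable ha
    have hiff := integrableOn_image_iff_integrableOn_abs_deriv_smul measurableSet_Ioi hψderiv
      hψinj (fun v => Real.exp (-(φ v)^2))
    rw [hψimg] at hiff
    have hψcomp : ∀ u ∈ Ioi (0:ℝ),
        |(-(b/a)) * ((u:ℝ)^2)⁻¹| • Real.exp (-(φ (ψ u))^2)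
          = (b/(a*u^2)) * Real.exp (-(φ u)^2) := by
      intro u hu
      have hu0 : (0:ℝ) < u := hu
      have h1 : φ (ψ u) = -(φ u) := by
        simp only [hφ, hψ]
        field_simp
        ring
      rw [h1, smul_eq_mul, hψabs u hu, neg_sq]
    have hI2 : IntegrableOn (fun u => (b/(a*u^2)) * Real.exp (-(φ u)^2)) (Ioi 0) := by
      refine (hiff.mp hI).congr_fun (fun u hu => ?_) measurableSet_Ioi
      simpa using hψcomp u hu
    have hswap2 : J = ∫ u in Ioi (0:ℝ), (b/(a*u^2)) * Real.exp (-(φ u)^2) :=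
      hswap.trans (setIntegral_congr_fun measurableSet_Ioi hψcomp)
    have habs : ∀ u ∈ Ioi (0:ℝ), |a + b/u^2| • Real.exp (-(φ u)^2)
        = a * Real.exp (-(φ u)^2) + a * ((b/(a*u^2)) * Real.exp (-(φ u)^2)) := by
      intro u hu
      have hu0 : (0:ℝ) < u := hu
      rw [smul_eq_mul, abs_of_nonneg (by positivity)]
      field_simp
    have hsum : Real.sqrt π = a * J + a * J := by
      rw [← hgauss, hchg, setIntegral_congr_fun measurableSet_Ioi habs,
        integral_add (hI.const_mul a) (hI2.const_mul a),
        integral_const_mul, integral_const_mul, ← hJ, ← hswap2]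
    have h2a : (2*a) ≠ 0 := by positivity
    field_simp
    linarith [hsum]

lemma heatKernel_nonneg (t z : ℝ) : 0 ≤ heatKernel t z :=
  div_nonneg (Real.exp_nonneg _) (Real.sqrt_nonneg _)

lemma integrable_exp_heat {μ : ℝ} (c : ℝ) (hμ : 0 < μ) :
    IntegrableOn (fun t => Real.exp (-μ * t) * heatKernel t c) (Ioi 0) := by
  have hmaj : IntegrableOn
      (fun t : ℝ => (Real.sqrt (4*π))⁻¹ * (t ^ (-(1:ℝ)/2) * Real.exp (-μ * t))) (Ioi 0) := by
    apply Integrable.const_mul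
    have h := integrableOn_rpow_mul_exp_neg_mul_rpow (p := 1) (s := -(1:ℝ)/2)
      (by norm_num) (by norm_num) hμ
    refine h.congr_fun (fun t ht => ?_) measurableSet_Ioi
    simp only [Real.rpow_one]
  refine Integrable.mono' hmaj ?_ ?_
  · apply Measurable.aestronglyMeasurable
    unfold heatKernel
    fun_prop
  · filter_upwards [ae_restrict_mem measurableSet_Ioi] with t ht
    have ht0 : (0:ℝ) < t := ht
    have h1 : heatKernel t c ≤ (Real.sqrt (4*π))⁻¹ * t ^ (-(1:ℝ)/2) := by
      unfold heatKernel
      rw [Real.sqrt_mul (by positivity) t]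
      have h2 : Real.exp (-(c^2)/(4*t)) ≤ 1 := by
        rw [Real.exp_le_one_iff, neg_div]
        have : (0:ℝ) ≤ c^2/(4*t) := by positivity
        linarith
      have h3 : t ^ (-(1:ℝ)/2) = (Real.sqrt t)⁻¹ := by
        rw [show -(1:ℝ)/2 = -(1/2) by norm_num, Real.rpow_neg ht0.le, Real.sqrt_eq_rpow]
      rw [h3, div_le_iff₀ (by positivity)]
      calc Real.exp (-(c^2)/(4*t)) ≤ 1 := h2
        _ = (Real.sqrt (4*π))⁻¹ * (Real.sqrt t)⁻¹ * (Real.sqrt (4*π) * Real.sqrt t) := by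
            field_simp
    rw [Real.norm_eq_abs, abs_of_nonneg (mul_nonneg (Real.exp_nonneg _) (heatKernel_nonneg t c))]
    calc Real.exp (-μ*t) * heatKernel t c
        ≤ Real.exp (-μ*t) * ((Real.sqrt (4*π))⁻¹ * t ^ (-(1:ℝ)/2)) :=
          mul_le_mul_of_nonneg_left h1 (Real.exp_nonneg _)
      _ = (Real.sqrt (4*π))⁻¹ * (t ^ (-(1:ℝ)/2) * Real.exp (-μ * t)) := by ring

lemma laplace_heat {μ c : ℝ} (hμ : 0 < μ) (hc : 0 ≤ c) :
    ∫ t in Ioi (0:ℝ), Real.exp (-μ * t) * heatKernel t c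
      = Real.exp (-c * Real.sqrt μ) / (2 * Real.sqrt μ) := by
  have hderiv : ∀ u ∈ Ioi (0:ℝ), HasDerivWithinAt (fun u : ℝ => u^2) (2*u) (Ioi 0) u := by
    intro u hu
    simpa using (hasDerivAt_pow 2 u).hasDerivWithinAt
  have hinj : InjOn (fun u : ℝ => u^2) (Ioi 0) := by
    intro u hu v hv h
    have hu0 : (0:ℝ) < u := hu
    have hv0 : (0:ℝ) < v := hv
    simp only at h
    nlinarith
  have himg : (fun u : ℝ => u^2) '' Ioi 0 = Ioi 0 := by
    ext w
    constructor
    · rintro ⟨u, hu, rfl⟩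
      have hu0 : (0:ℝ) < u := hu
      exact pow_pos hu0 2
    · intro hw
      have hw0 : (0:ℝ) < w := hw
      exact ⟨Real.sqrt w, Real.sqrt_pos.2 hw0, Real.sq_sqrt hw0.le⟩
  have key := integral_image_eq_integral_abs_deriv_smul measurableSet_Ioi hderiv hinj
    (fun t => Real.exp (-μ*t) * heatKernel t c)
  rw [himg] at key
  rw [key]
  set a := Real.sqrt μ with haa
  have ha : 0 < a := Real.sqrt_pos.2 hμ
  have ha2 : a^2 = μ := Real.sq_sqrt hμ.le
  have hcong : ∀ u ∈ Ioi (0:ℝ), |2*u| • (Real.exp (-μ*u^2) * heatKernel (u^2) c)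
      = (Real.exp (-(c*a)) / Real.sqrt π) * Real.exp (-(a*u - (c/2)/u)^2) := by
    intro u hu
    have hu0 : (0:ℝ) < u := hu
    rw [smul_eq_mul, abs_of_nonneg (by positivity)]
    unfold heatKernel
    have h1 : Real.sqrt (4*π*u^2) = 2*Real.sqrt π * u := by
      rw [Real.sqrt_mul (by positivity), Real.sqrt_sq hu0.le, show (4:ℝ)*π = 2^2*π by ring,
        Real.sqrt_mul (by positivity), Real.sqrt_sq (by norm_num)]
    rw [h1]
    have h2 : 2*u * (Real.exp (-μ*u^2) * (Real.exp (-(c^2)/(4*u^2)) / (2*Real.sqrt π*u)))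
        = Real.exp (-μ*u^2 + -(c^2)/(4*u^2)) / Real.sqrt π := by
      rw [Real.exp_add]
      have hπ : Real.sqrt π ≠ 0 := by positivity
      field_simp
    rw [h2]
    have hexp : -μ*u^2 + -(c^2)/(4*u^2) = -(c*a) + -(a*u - (c/2)/u)^2 := by
      rw [← ha2]
      field_simp
      ring
    rw [hexp, Real.exp_add]
    ring
  rw [setIntegral_congr_fun measurableSet_Ioi hcong, integral_const_mul,
    glasser ha (by positivity : (0:ℝ) ≤ c/2)]
  have hπ : Real.sqrt π ≠ 0 := by positivity
  rw [show -(c*a) = -c*a by ring]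
  field_simp

theorem laplace_transform_resetting_density
    (r l x : ℝ) (hr : 0 < r) (hl : 0 < l) (hx : 0 ≤ x) :
    ∀ y > (0:ℝ),
      ∫ t in Ioi (0:ℝ), Real.exp (-l * t) *
          (Real.exp (-r * t) * (heatKernel t (x + y) + heatKernel t (y - x))
            + ∫ s in Ioc (0:ℝ) t, 2 * r * Real.exp (-r * s) * heatKernel s y)
        = (1/2) * Real.exp (-(x + y) * Real.sqrt (l + r)) / Real.sqrt (l + r)
          + (1/2) * Real.exp (-|y - x| * Real.sqrt (l + r)) / Real.sqrt (l + r)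
          + (r / l) * Real.exp (-y * Real.sqrt (l + r)) / Real.sqrt (l + r) := by
  intro y hy
  have hlr : 0 < l + r := by linarith
  set h : ℝ → ℝ := fun s => 2 * r * Real.exp (-r * s) * heatKernel s y with hh
  have hmeas_h : Measurable h := by
    rw [hh]
    unfold heatKernel
    fun_prop
  have hh_nonneg : ∀ s, 0 ≤ h s :=
    fun s => mul_nonneg (by positivity) (heatKernel_nonneg s y)
  set F : ℝ → ℝ → ℝ := fun t s => Real.exp (-l * t) * (if s ≤ t then h s else 0) with hF
  have hF_nonneg : ∀ t s, 0 ≤ F t s := by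
    intro t s
    apply mul_nonneg (Real.exp_nonneg _)
    split_ifs
    · exact hh_nonneg s
    · exact le_rfl
  -- inner t-integral for fixed s > 0
  have claim1 : ∀ s : ℝ, 0 < s → ∫ t in Ioi (0:ℝ), F t s = h s * (l⁻¹ * Real.exp (-(l*s))) := by
    intro s hs
    have heq : (fun t => F t s) = Set.indicator (Ici s) (fun t => Real.exp (-l*t) * h s) := by
      funext t
      simp only [hF, Set.indicator_apply, mem_Ici]
      by_cases hts : s ≤ t <;> simp [hts]
    rw [heq, integral_indicator measurableSet_Ici, Measure.restrict_restrict measurableSet_Ici]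
    have h2 : Ici s ∩ Ioi 0 = Ici s := inter_eq_left.2 (fun t ht => lt_of_lt_of_le hs ht)
    rw [h2, integral_Ici_eq_integral_Ioi, integral_mul_const]
    have h3 : ∀ t : ℝ, Real.exp (-l*t) = (fun x : ℝ => Real.exp (-x)) (l * t) := by
      intro t; simp [neg_mul]
    simp_rw [h3]
    rw [integral_comp_mul_left_Ioi (fun x : ℝ => Real.exp (-x)) s hl, integral_exp_neg_Ioi]
    simp [smul_eq_mul]
    ring
  -- inner s-integral for fixed t
  have claim0 : ∀ t : ℝ, ∫ s in Ioi (0:ℝ), F t s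
      = Real.exp (-l*t) * ∫ s in Ioc (0:ℝ) t, h s := by
    intro t
    have heq : (fun s => F t s) = fun s => Real.exp (-l*t) * Set.indicator (Iic t) h s := by
      funext s
      simp only [hF, Set.indicator_apply, mem_Iic]
    rw [heq, integral_const_mul, integral_indicator measurableSet_Iic,
      Measure.restrict_restrict measurableSet_Iic]
    have h2 : Iic t ∩ Ioi 0 = Ioc 0 t := by
      ext s
      simp only [mem_inter_iff, mem_Iic, mem_Ioi, mem_Ioc]
      tauto
    rw [h2]
  -- measurability of uncurry F
  have hFmeas : AEStronglyMeasurable (Function.uncurry F)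
      ((volume.restrict (Ioi (0:ℝ))).prod (volume.restrict (Ioi (0:ℝ)))) := by
    apply Measurable.aestronglyMeasurable
    have : Function.uncurry F = fun p : ℝ × ℝ =>
        Real.exp (-l * p.1) * Set.indicator {p : ℝ × ℝ | p.2 ≤ p.1} (fun q => h q.2) p := by
      funext p
      simp only [Function.uncurry, hF, Set.indicator_apply, mem_setOf_eq]
    rw [this]
    exact (measurable_fst.const_mul (-l)).exp.mul
      ((hmeas_h.comp measurable_snd).indicator (measurableSet_le measurable_snd measurable_fst))
  -- slice integrability
  have hFslice : ∀ᵐ s ∂(volume.restrict (Ioi (0:ℝ))),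
      Integrable (fun t => F t s) (volume.restrict (Ioi (0:ℝ))) := by
    filter_upwards [ae_restrict_mem measurableSet_Ioi] with s hs
    have heq : (fun t => F t s) = Set.indicator (Ici s) (fun t => Real.exp (-l*t) * h s) := by
      funext t
      simp only [hF, Set.indicator_apply, mem_Ici]
      by_cases hts : s ≤ t <;> simp [hts]
    rw [heq]
    exact ((exp_neg_integrableOn_Ioi 0 hl).mul_const (h s)).indicator measurableSet_Ici
  have hps : ∀ s : ℝ, 2*r*l⁻¹ * (Real.exp (-(l+r)*s) * heatKernel s y)
      = h s * (l⁻¹ * Real.exp (-(l*s))) := by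
    intro s
    have he : Real.exp (-(l+r)*s) = Real.exp (-r*s) * Real.exp (-(l*s)) := by
      rw [← Real.exp_add]
      congr 1
      ring
    rw [hh, he]
    ring
  have hint2 : Integrable (fun s => h s * (l⁻¹ * Real.exp (-(l*s))))
      (volume.restrict (Ioi (0:ℝ))) := by
    have := (integrable_exp_heat (μ := l + r) y hlr).const_mul (2*r*l⁻¹)
    refine this.congr (Filter.Eventually.of_forall fun s => ?_)
    exact hps s
  -- product integrability
  have hFint : Integrable (Function.uncurry F)
      ((volume.restrict (Ioi (0:ℝ))).prod (volume.restrict (Ioi (0:ℝ)))) := by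
    rw [integrable_prod_iff' hFmeas]
    refine ⟨hFslice, ?_⟩
    have hnorm : ∀ s : ℝ, (fun t => ‖Function.uncurry F (t, s)‖) = fun t => F t s := by
      intro s
      funext t
      simp only [Function.uncurry]
      rw [Real.norm_eq_abs, abs_of_nonneg (hF_nonneg t s)]
    refine hint2.congr ?_
    filter_upwards [ae_restrict_mem measurableSet_Ioi] with s hs
    rw [hnorm s, claim1 s hs]
  -- Fubini
  have hswap : ∫ t in Ioi (0:ℝ), ∫ s in Ioi (0:ℝ), F t s
      = ∫ s in Ioi (0:ℝ), ∫ t in Ioi (0:ℝ), F t s := integral_integral_swap hFint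
  have hB : Integrable (fun t => Real.exp (-l*t) * ∫ s in Ioc (0:ℝ) t, h s)
      (volume.restrict (Ioi (0:ℝ))) := by
    refine hFint.integral_prod_left.congr (Filter.Eventually.of_forall fun t => ?_)
    exact claim0 t
  have hS : Real.sqrt (l + r) ≠ 0 := by positivity
  have hT : ∫ t in Ioi (0:ℝ), Real.exp (-l*t) * ∫ s in Ioc (0:ℝ) t, h s
      = (r/l) * Real.exp (-y * Real.sqrt (l+r)) / Real.sqrt (l+r) := by
    calc ∫ t in Ioi (0:ℝ), Real.exp (-l*t) * ∫ s in Ioc (0:ℝ) t, h s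
        = ∫ t in Ioi (0:ℝ), ∫ s in Ioi (0:ℝ), F t s := by
          refine setIntegral_congr_fun measurableSet_Ioi fun t ht => ?_
          exact (claim0 t).symm
      _ = ∫ s in Ioi (0:ℝ), ∫ t in Ioi (0:ℝ), F t s := hswap
      _ = ∫ s in Ioi (0:ℝ), 2*r*l⁻¹ * (Real.exp (-(l+r)*s) * heatKernel s y) := by
          refine setIntegral_congr_fun measurableSet_Ioi fun s hs => ?_
          rw [claim1 s hs, ← hps s]
      _ = 2*r*l⁻¹ * ∫ s in Ioi (0:ℝ), Real.exp (-(l+r)*s) * heatKernel s y :=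
          integral_const_mul _ _
      _ = 2*r*l⁻¹ * (Real.exp (-y * Real.sqrt (l+r)) / (2 * Real.sqrt (l+r))) := by
          rw [laplace_heat hlr hy.le]
      _ = (r/l) * Real.exp (-y * Real.sqrt (l+r)) / Real.sqrt (l+r) := by
          field_simp
  -- the two heat kernel terms
  have hk1 : ∫ t in Ioi (0:ℝ), Real.exp (-(l+r)*t) * heatKernel t (x+y)
      = Real.exp (-(x+y) * Real.sqrt (l+r)) / (2 * Real.sqrt (l+r)) :=
    laplace_heat hlr (by linarith)
  have habs : ∀ t : ℝ, heatKernel t (y - x) = heatKernel t |y - x| := by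
    intro t
    unfold heatKernel
    rw [sq_abs]
  have hk2 : ∫ t in Ioi (0:ℝ), Real.exp (-(l+r)*t) * heatKernel t (y-x)
      = Real.exp (-|y-x| * Real.sqrt (l+r)) / (2 * Real.sqrt (l+r)) := by
    simp_rw [habs]
    exact laplace_heat hlr (abs_nonneg _)
  -- assembly
  have hsplit : (fun t => Real.exp (-l * t) *
        (Real.exp (-r * t) * (heatKernel t (x + y) + heatKernel t (y - x))
          + ∫ s in Ioc (0:ℝ) t, 2 * r * Real.exp (-r * s) * heatKernel s y))
      = fun t => (Real.exp (-(l+r)*t) * heatKernel t (x+y)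
          + Real.exp (-(l+r)*t) * heatKernel t (y-x))
          + Real.exp (-l*t) * ∫ s in Ioc (0:ℝ) t, h s := by
    funext t
    have he : Real.exp (-(l+r)*t) = Real.exp (-l*t) * Real.exp (-r*t) := by
      rw [← Real.exp_add]
      congr 1
      ring
    rw [hh, he]
    ring
  have hI1 : Integrable (fun t => Real.exp (-(l+r)*t) * heatKernel t (x+y)
      + Real.exp (-(l+r)*t) * heatKernel t (y-x)) (volume.restrict (Ioi (0:ℝ))) :=
    (integrable_exp_heat (x+y) hlr).add (integrable_exp_heat (y-x) hlr)
  rw [hsplit, integral_add hI1 hB,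
    integral_add (integrable_exp_heat (x+y) hlr) (integrable_exp_heat (y-x) hlr),
    hk1, hk2, hT]
  ring
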